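/- Let m > 1 and d̂ > m + 1 be real parameters, and let c₁ = K²/(4π²), c₂ = (d̂−1)K/(4π), c₃ = −d̂K²/(4π²), c₄ = d̂ − m − 1. Consider the 2K×2K symmetric block matrix T = [[c₁A₁ + c₄I, c₂A₂],[−c₂A₂, c₃A₁]] with A₁, A₂ the circulant matrices above. Then for K large enough (depending on d̂ growing like m ln K), T has exactly one zero eigenvalue, exactly K−1 negative eigenvalues, and exactly K positive eigenvalues. -/

import Mathlib

open Real

open scoped Classical

/-- Real circulant matrix: entry `(j,k)` is `b (k - j)` (cyclic difference). -/
def circMatR {K : ℕ} (b : Fin K → ℝ) : Matrix (Fin K) (Fin K) ℝ :=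
  fun j k => b (k - j)

/-- `A₁ = circ{(-2,1,0,…,0,1)}`, the discrete periodic Laplacian. -/
def matA₁ (K : ℕ) : Matrix (Fin K) (Fin K) ℝ :=
  circMatR (fun i : Fin K =>
    if (i : ℕ) = 0 then -2 else if (i : ℕ) = 1 then 1
      else if (i : ℕ) = K - 1 then 1 else 0)

/-- `A₂ = circ{(0,1,0,…,0,-1)}`, the centered discrete first difference. -/
def matA₂ (K : ℕ) : Matrix (Fin K) (Fin K) ℝ :=
  circMatR (fun i : Fin K =>
    if (i : ℕ) = 1 then 1 else if (i : ℕ) = K - 1 then -1 else 0)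

/-- The `2K × 2K` block matrix `T = [[c₁A₁ + c₄I, c₂A₂], [-c₂A₂, c₃A₁]]` with
`c₁ = K²/(4π²)`, `c₂ = (dhat-1)K/(4π)`, `c₃ = -dhatK²/(4π²)`, `c₄ = dhat - m - 1`. -/
noncomputable def matT (K : ℕ) (m dhat : ℝ) :
    Matrix (Fin K ⊕ Fin K) (Fin K ⊕ Fin K) ℝ :=
  Matrix.fromBlocks
    (((K : ℝ) ^ 2 / (4 * π ^ 2)) • matA₁ K + (dhat - m - 1) • (1 : Matrix (Fin K) (Fin K) ℝ))
    (((dhat - 1) * K / (4 * π)) • matA₂ K)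
    ((-((dhat - 1) * K / (4 * π))) • matA₂ K)
    ((-(dhat * (K : ℝ) ^ 2 / (4 * π ^ 2))) • matA₁ K)

/- ### Auxiliary general lemmas -/

section Aux

open Matrix Polynomial

variable {R : Type*} [CommRing R] {n : Type*} [DecidableEq n] [Fintype n]

lemma my_eval_charpoly (M : Matrix n n R) (x : R) :
    (M.charpoly).eval x = (x • (1 : Matrix n n R) - M).det := by
  rw [Matrix.charpoly, ← Polynomial.coe_evalRingHom, RingHom.map_det]
  congr 1
  ext i j
  by_cases h : i = j <;>
    simp [charmatrix_apply, Matrix.one_apply, h, Matrix.map_apply, Matrix.sub_apply,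
      Matrix.smul_apply]

lemma my_det_fromBlocks_diagonal {K : ℕ} (a b c d : Fin K → R) :
    (Matrix.fromBlocks (diagonal a) (diagonal b) (diagonal c) (diagonal d)).det
      = ∏ l : Fin K, (a l * d l - b l * c l) := by
  classical
  let M : Fin K → Matrix Bool Bool R := fun l => Matrix.of fun i j =>
    match i, j with
    | false, false => a l
    | false, true => b l
    | true, false => c l
    | true, true => d l
  have he : (Matrix.fromBlocks (diagonal a) (diagonal b) (diagonal c) (diagonal d))
      = (Matrix.blockDiagonal M).submatrix
        (fun x : Fin K ⊕ Fin K => Sum.elim (fun l => ((false : Bool), l)) (fun l => (true, l)) x)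
        (fun x : Fin K ⊕ Fin K => Sum.elim (fun l => ((false : Bool), l)) (fun l => (true, l)) x) := by
    ext i j
    rcases i with i | i <;> rcases j with j | j <;>
      by_cases h : i = j <;>
      simp [Matrix.blockDiagonal_apply, Matrix.diagonal_apply, h, M, Matrix.submatrix_apply]
  rw [he]
  let e : Fin K ⊕ Fin K ≃ Bool × Fin K :=
    { toFun := Sum.elim (fun l => (false, l)) (fun l => (true, l)),
      invFun := fun p => cond p.1 (.inr p.2) (.inl p.2),
      left_inv := by rintro (l | l) <;> rfl,
      right_inv := by rintro ⟨(_ | _), l⟩ <;> rfl }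
  rw [show (fun x : Fin K ⊕ Fin K => Sum.elim (fun l => ((false : Bool), l))
      (fun l => ((true : Bool), l)) x) = ⇑e from rfl,
    Matrix.det_submatrix_equiv_self e, Matrix.det_blockDiagonal]
  congr 1
  funext l
  rw [← Matrix.det_submatrix_equiv_self finTwoEquiv (M l),
    show ((M l).submatrix finTwoEquiv finTwoEquiv) =
      !![a l, b l; c l, d l] by ext i j; fin_cases i <;> fin_cases j <;> rfl]
  simp [Matrix.det_fin_two_of]

end Aux

/- ### Fourier matrix machinery -/

noncomputable section Fourier

open Matrix

/-- primitive K-th root of unity -/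
noncomputable def zetaK (K : ℕ) : ℂ := Complex.exp (2 * ↑Real.pi * Complex.I / K)

/-- Fourier matrix -/
noncomputable def Fmat (K : ℕ) : Matrix (Fin K) (Fin K) ℂ :=
  Matrix.of fun j k => zetaK K ^ ((j : ℕ) * (k : ℕ))

lemma zetaK_prim (K : ℕ) (hK : K ≠ 0) : IsPrimitiveRoot (zetaK K) K :=
  Complex.isPrimitiveRoot_exp K hK

lemma zetaK_pow_K (K : ℕ) (hK : K ≠ 0) : zetaK K ^ K = 1 := (zetaK_prim K hK).pow_eq_one

lemma zetaK_pow_mod (K : ℕ) (hK : K ≠ 0) (n : ℕ) : zetaK K ^ n = zetaK K ^ (n % K) := by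
  conv_lhs => rw [← Nat.mod_add_div n K]
  rw [pow_add, pow_mul, zetaK_pow_K K hK, one_pow, mul_one]

lemma det_Fmat_ne_zero (K : ℕ) (hK : K ≠ 0) : (Fmat K).det ≠ 0 := by
  have : Fmat K = Matrix.vandermonde (fun j : Fin K => zetaK K ^ (j : ℕ)) := by
    ext i j; simp [Fmat, Matrix.vandermonde, ← pow_mul]
  rw [this, Matrix.det_vandermonde]
  apply Finset.prod_ne_zero_iff.mpr
  intro i _
  apply Finset.prod_ne_zero_iff.mpr
  intro j hj
  rw [Finset.mem_Ioi] at hj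
  intro h
  have := (zetaK_prim K hK).pow_inj j.isLt i.isLt (sub_eq_zero.mp h)
  exact absurd (Fin.val_injective this) hj.ne'

/-- circulant-type matrices are "diagonalized" by the Fourier matrix -/
lemma circ_mul_Fmat (K : ℕ) (hK : K ≠ 0) (b : Fin K → ℂ) (M : Matrix (Fin K) (Fin K) ℂ)
    (hM : ∀ j k, M j k = b (k - j)) :
    M * Fmat K = Fmat K * Matrix.diagonal (fun l : Fin K =>
      ∑ t : Fin K, b t * zetaK K ^ ((t : ℕ) * (l : ℕ))) := by
  haveI : NeZero K := ⟨hK⟩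
  ext j l
  rw [Matrix.mul_apply, Matrix.mul_diagonal]
  have step : ∀ k : Fin K, M j k * Fmat K k l
      = (fun t : Fin K => b t * zetaK K ^ (((t + j : Fin K) : ℕ) * (l : ℕ))) (k - j) := by
    intro k
    simp only [hM, Fmat, Matrix.of_apply]
    rw [sub_add_cancel]
  calc ∑ k : Fin K, M j k * Fmat K k l
      = ∑ t : Fin K, b t * zetaK K ^ (((t + j : Fin K) : ℕ) * (l : ℕ)) :=
        Fintype.sum_equiv (Equiv.subRight j) _ _ step
    _ = Fmat K j l * ∑ t : Fin K, b t * zetaK K ^ ((t : ℕ) * (l : ℕ)) := by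
        rw [Finset.mul_sum]
        congr 1; funext t
        have : zetaK K ^ (((t + j : Fin K) : ℕ) * (l : ℕ))
            = zetaK K ^ ((j : ℕ) * (l : ℕ)) * zetaK K ^ ((t : ℕ) * (l : ℕ)) := by
          rw [Fin.val_add, pow_mul, ← zetaK_pow_mod K hK, pow_add, mul_pow, ← pow_mul, ← pow_mul]
          ring
        rw [this, Fmat, Matrix.of_apply]; ring

lemma zetaK_pow_fin (K : ℕ) (hK : K ≠ 0) (l : Fin K) :
    zetaK K ^ (l : ℕ) = Complex.exp ((2 * π * l / K : ℝ) * Complex.I) := by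
  rw [zetaK, ← Complex.exp_nat_mul]
  congr 1
  have hK0 : (K : ℂ) ≠ 0 := Nat.cast_ne_zero.mpr hK
  field_simp
  push_cast
  ring_nf
  rw [mul_inv_cancel_right₀ hK0]

lemma zetaK_pow_fin' (K : ℕ) (hK : K ≠ 0) (l : Fin K) :
    zetaK K ^ ((K - 1) * (l : ℕ)) = Complex.exp (-(((2 * π * l / K : ℝ) : ℂ) * Complex.I)) := by
  have h1 : zetaK K ^ ((K - 1) * (l : ℕ)) * zetaK K ^ (l : ℕ) = 1 := by
    rw [← pow_add]
    have : (K - 1) * (l : ℕ) + (l : ℕ) = K * (l : ℕ) := by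
      cases K with
      | zero => exact absurd rfl hK
      | succ n => simp [Nat.succ_sub_one]; ring
    rw [this, pow_mul, zetaK_pow_K K hK, one_pow]
  have := eq_inv_of_mul_eq_one_left h1
  rw [this, zetaK_pow_fin K hK l, ← Complex.exp_neg]

lemma zetaK_pow_fin_cs (K : ℕ) (hK : K ≠ 0) (l : Fin K) :
    zetaK K ^ (l : ℕ)
      = Complex.cos ((2 * π * l / K : ℝ) : ℂ) + Complex.sin ((2 * π * l / K : ℝ) : ℂ)
        * Complex.I := by
  rw [zetaK_pow_fin K hK l, Complex.exp_mul_I]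

lemma zetaK_pow_fin_cs' (K : ℕ) (hK : K ≠ 0) (l : Fin K) :
    zetaK K ^ ((K - 1) * (l : ℕ))
      = Complex.cos ((2 * π * l / K : ℝ) : ℂ) - Complex.sin ((2 * π * l / K : ℝ) : ℂ)
        * Complex.I := by
  rw [zetaK_pow_fin' K hK l,
    show -(((2 * π * l / K : ℝ) : ℂ) * Complex.I) = ((-(2 * π * l / K) : ℝ) : ℂ) * Complex.I by
      push_cast; ring,
    Complex.exp_mul_I, Complex.ofReal_neg, Complex.cos_neg, Complex.sin_neg]
  ring

lemma sumA1_eq (K : ℕ) (hK : 3 ≤ K) (l : Fin K) :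
    ∑ t : Fin K, ((if (t : ℕ) = 0 then (-2 : ℝ) else if (t : ℕ) = 1 then 1
        else if (t : ℕ) = K - 1 then 1 else 0) : ℂ) * zetaK K ^ ((t : ℕ) * (l : ℕ))
      = ((-4 * Real.sin (π * l / K) ^ 2 : ℝ) : ℂ) := by
  have hK0 : K ≠ 0 := by omega
  set f : Fin K → ℂ := fun t => ((if (t : ℕ) = 0 then (-2 : ℝ) else if (t : ℕ) = 1 then 1
      else if (t : ℕ) = K - 1 then 1 else 0) : ℂ) * zetaK K ^ ((t : ℕ) * (l : ℕ)) with hf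
  have sum_eq : ∑ t : Fin K, f t
      = f ⟨0, by omega⟩ + (f ⟨1, by omega⟩ + f ⟨K - 1, by omega⟩) := by
    rw [← Finset.sum_subset (Finset.subset_univ ({⟨0, by omega⟩, ⟨1, by omega⟩, ⟨K - 1, by omega⟩}
        : Finset (Fin K)))]
    · rw [Finset.sum_insert (by simp [Fin.ext_iff]; omega),
        Finset.sum_insert (by simp [Fin.ext_iff]; omega),
        Finset.sum_singleton]
    · intro x _ hx
      simp only [Finset.mem_insert, Finset.mem_singleton, Fin.ext_iff] at hx
      push_neg at hx
      have h1 : (x : ℕ) ≠ 0 := by simpa using hx.1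
      have h2 : (x : ℕ) ≠ 1 := by simpa using hx.2.1
      have h3 : (x : ℕ) ≠ K - 1 := by simpa using hx.2.2
      simp [hf, h1, h2, h3]
  have e0 : f ⟨0, by omega⟩ = -2 := by simp [hf]
  have e1 : f ⟨1, by omega⟩
      = Complex.cos ((2 * π * l / K : ℝ) : ℂ) + Complex.sin ((2 * π * l / K : ℝ) : ℂ)
        * Complex.I := by
    show ((if (1 : ℕ) = 0 then (-2 : ℝ) else if (1 : ℕ) = 1 then 1
        else if (1 : ℕ) = K - 1 then 1 else 0) : ℂ) * zetaK K ^ (1 * (l : ℕ)) = _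
    rw [if_neg (by omega : ¬(1 : ℕ) = 0), if_pos rfl]
    simp [zetaK_pow_fin_cs K hK0 l]
  have e2 : f ⟨K - 1, by omega⟩
      = Complex.cos ((2 * π * l / K : ℝ) : ℂ) - Complex.sin ((2 * π * l / K : ℝ) : ℂ)
        * Complex.I := by
    show ((if (K - 1 : ℕ) = 0 then (-2 : ℝ) else if (K - 1 : ℕ) = 1 then 1
        else if (K - 1 : ℕ) = K - 1 then 1 else 0) : ℂ) * zetaK K ^ ((K - 1) * (l : ℕ)) = _
    rw [if_neg (by omega : ¬(K - 1 : ℕ) = 0), if_neg (by omega : ¬(K - 1 : ℕ) = 1), if_pos rfl]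
    simp [zetaK_pow_fin_cs' K hK0 l]
  rw [sum_eq, e0, e1, e2]
  have hcos : Real.cos (2 * π * l / K) = 1 - 2 * Real.sin (π * l / K) ^ 2 := by
    have h2 : 2 * π * (l : ℝ) / K = 2 * (π * l / K) := by ring
    rw [h2, Real.cos_two_mul]
    nlinarith [Real.sin_sq_add_cos_sq (π * l / K)]
  have hcosC : Complex.cos ((2 * π * l / K : ℝ) : ℂ)
      = 1 - 2 * ((Real.sin (π * l / K) : ℝ) : ℂ) ^ 2 := by
    rw [← Complex.ofReal_cos, hcos]; push_cast; ring
  rw [hcosC]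
  push_cast
  ring

lemma sumA2_sq_eq (K : ℕ) (hK : 3 ≤ K) (l : Fin K) :
    (∑ t : Fin K, ((if (t : ℕ) = 1 then (1 : ℝ) else if (t : ℕ) = K - 1 then -1 else 0) : ℂ)
        * zetaK K ^ ((t : ℕ) * (l : ℕ))) ^ 2
      = ((-16 * Real.sin (π * l / K) ^ 2 * (1 - Real.sin (π * l / K) ^ 2) : ℝ) : ℂ) := by
  have hK0 : K ≠ 0 := by omega
  set f : Fin K → ℂ := fun t => ((if (t : ℕ) = 1 then (1 : ℝ) else if (t : ℕ) = K - 1 then -1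
      else 0) : ℂ) * zetaK K ^ ((t : ℕ) * (l : ℕ)) with hf
  have sum_eq : ∑ t : Fin K, f t = f ⟨1, by omega⟩ + f ⟨K - 1, by omega⟩ := by
    rw [← Finset.sum_subset (Finset.subset_univ ({⟨1, by omega⟩, ⟨K - 1, by omega⟩}
        : Finset (Fin K)))]
    · rw [Finset.sum_insert (by simp [Fin.ext_iff]; omega), Finset.sum_singleton]
    · intro x _ hx
      simp only [Finset.mem_insert, Finset.mem_singleton, Fin.ext_iff] at hx
      push_neg at hx
      have h1 : (x : ℕ) ≠ 1 := by simpa using hx.1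
      have h2 : (x : ℕ) ≠ K - 1 := by simpa using hx.2
      simp [hf, h1, h2]
  have e1 : f ⟨1, by omega⟩
      = Complex.cos ((2 * π * l / K : ℝ) : ℂ) + Complex.sin ((2 * π * l / K : ℝ) : ℂ)
        * Complex.I := by
    show ((if (1 : ℕ) = 1 then (1 : ℝ) else if (1 : ℕ) = K - 1 then -1 else 0) : ℂ)
        * zetaK K ^ (1 * (l : ℕ)) = _
    rw [if_pos rfl]
    simp [zetaK_pow_fin_cs K hK0 l]
  have e2 : f ⟨K - 1, by omega⟩
      = -(Complex.cos ((2 * π * l / K : ℝ) : ℂ) - Complex.sin ((2 * π * l / K : ℝ) : ℂ)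
        * Complex.I) := by
    show ((if (K - 1 : ℕ) = 1 then (1 : ℝ) else if (K - 1 : ℕ) = K - 1 then -1 else 0) : ℂ)
        * zetaK K ^ ((K - 1) * (l : ℕ)) = _
    rw [if_neg (by omega : ¬(K - 1 : ℕ) = 1), if_pos rfl]
    simp [zetaK_pow_fin_cs' K hK0 l]
  rw [sum_eq, e1, e2]
  have hsin : Real.sin (2 * π * l / K) ^ 2
      = 4 * Real.sin (π * l / K) ^ 2 * (1 - Real.sin (π * l / K) ^ 2) := by
    have h2 : 2 * π * (l : ℝ) / K = 2 * (π * l / K) := by ring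
    rw [h2, Real.sin_two_mul]
    nlinarith [Real.sin_sq_add_cos_sq (π * l / K)]
  have hsinC : Complex.sin ((2 * π * l / K : ℝ) : ℂ) ^ 2
      = 4 * ((Real.sin (π * l / K) : ℝ) : ℂ) ^ 2 * (1 - ((Real.sin (π * l / K) : ℝ) : ℂ) ^ 2) := by
    rw [← Complex.ofReal_sin, ← Complex.ofReal_pow, hsin]; push_cast; ring
  push_cast at hsinC ⊢
  linear_combination (4 * Complex.sin ((2 * ↑π * (l : ℂ) / (K : ℂ))) ^ 2) * Complex.I_sq
    - 4 * hsinC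

end Fourier

/- ### The eigenvalue data of `matT` -/

noncomputable section EigData

/-- `sin²(πl/K)` -/
noncomputable def Sfun (K : ℕ) (l : Fin K) : ℝ := Real.sin (π * l / K) ^ 2

noncomputable def aRe (K : ℕ) (m dhat : ℝ) (l : Fin K) : ℝ :=
  (K : ℝ) ^ 2 / (4 * π ^ 2) * (-4 * Sfun K l) + (dhat - m - 1)

noncomputable def dRe (K : ℕ) (m dhat : ℝ) (l : Fin K) : ℝ :=
  -(dhat * (K : ℝ) ^ 2 / (4 * π ^ 2)) * (-4 * Sfun K l)

noncomputable def eRe (K : ℕ) (m dhat : ℝ) (l : Fin K) : ℝ :=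
  ((dhat - 1) * K / (4 * π)) ^ 2 * (-16 * Sfun K l * (1 - Sfun K l))

noncomputable def bRe (K : ℕ) (m dhat : ℝ) (l : Fin K) : ℝ :=
  aRe K m dhat l + dRe K m dhat l

noncomputable def cRe (K : ℕ) (m dhat : ℝ) (l : Fin K) : ℝ :=
  aRe K m dhat l * dRe K m dhat l + eRe K m dhat l

noncomputable def DRe (K : ℕ) (m dhat : ℝ) (l : Fin K) : ℝ :=
  bRe K m dhat l ^ 2 - 4 * cRe K m dhat l

noncomputable def rpF (K : ℕ) (m dhat : ℝ) (l : Fin K) : ℝ :=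
  (bRe K m dhat l + Real.sqrt (DRe K m dhat l)) / 2

noncomputable def rmF (K : ℕ) (m dhat : ℝ) (l : Fin K) : ℝ :=
  (bRe K m dhat l - Real.sqrt (DRe K m dhat l)) / 2

end EigData

section MainDet

open Matrix Polynomial

/-- maps of real matrices to `ℂ` -/
lemma mapRC_smul {n : Type*} (r : ℝ) (M : Matrix n n ℝ) :
    (r • M).map ⇑Complex.ofRealHom = (r : ℂ) • M.map ⇑Complex.ofRealHom := by
  ext i j; simp [Matrix.map_apply]

lemma mapRC_addsmul {n : Type*} [DecidableEq n] (r s : ℝ) (M : Matrix n n ℝ) :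
    ((r • M + s • (1 : Matrix n n ℝ)).map ⇑Complex.ofRealHom)
      = (r : ℂ) • M.map ⇑Complex.ofRealHom + (s : ℂ) • (1 : Matrix n n ℂ) := by
  ext i j
  by_cases h : i = j <;>
    simp [Matrix.map_apply, Matrix.add_apply, Matrix.smul_apply, Matrix.one_apply, h]

/-- The complex characteristic determinant of `matT` factors over the Fourier basis. -/
lemma det_key (K : ℕ) (hK : 3 ≤ K) (m dhat : ℝ) (x : ℂ) :
    (x • (1 : Matrix (Fin K ⊕ Fin K) (Fin K ⊕ Fin K) ℂ)
        - (matT K m dhat).map (Complex.ofRealHom)).det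
      = ∏ l : Fin K, ((x - ((aRe K m dhat l : ℝ) : ℂ)) * (x - ((dRe K m dhat l : ℝ) : ℂ))
          + ((eRe K m dhat l : ℝ) : ℂ)) := by
  have hK0 : K ≠ 0 := by omega
  haveI : NeZero K := ⟨hK0⟩
  set lam1 : Fin K → ℂ := fun l => ∑ t : Fin K,
    ((if (t : ℕ) = 0 then (-2 : ℝ) else if (t : ℕ) = 1 then 1
      else if (t : ℕ) = K - 1 then 1 else 0) : ℂ) * zetaK K ^ ((t : ℕ) * (l : ℕ)) with hlam1
  set lam2 : Fin K → ℂ := fun l => ∑ t : Fin K,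
    ((if (t : ℕ) = 1 then (1 : ℝ) else if (t : ℕ) = K - 1 then -1 else 0) : ℂ)
      * zetaK K ^ ((t : ℕ) * (l : ℕ)) with hlam2
  have hA1F : (matA₁ K).map ⇑Complex.ofRealHom * Fmat K = Fmat K * Matrix.diagonal lam1 := by
    apply circ_mul_Fmat K hK0
    intro j k
    simp only [matA₁, circMatR, Matrix.map_apply]
    split_ifs <;> norm_num
  have hA2F : (matA₂ K).map ⇑Complex.ofRealHom * Fmat K = Fmat K * Matrix.diagonal lam2 := by
    apply circ_mul_Fmat K hK0
    intro j k
    simp only [matA₂, circMatR, Matrix.map_apply]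
    split_ifs <;> norm_num
  have hsmul : ∀ (r : ℝ) (Mc : Matrix (Fin K) (Fin K) ℂ) (lam : Fin K → ℂ),
      Mc * Fmat K = Fmat K * Matrix.diagonal lam →
      ((r : ℂ) • Mc) * Fmat K = Fmat K * Matrix.diagonal (fun l => (r : ℂ) * lam l) := by
    intro r Mc lam h
    rw [Matrix.smul_mul, h, ← Matrix.mul_smul]
    congr 1
    ext i j
    by_cases hij : i = j <;> simp [Matrix.diagonal_apply, hij]
  have hP1 : ((((K : ℝ) ^ 2 / (4 * π ^ 2) : ℝ) : ℂ) • (matA₁ K).map ⇑Complex.ofRealHom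
        + ((dhat - m - 1 : ℝ) : ℂ) • 1) * Fmat K
      = Fmat K * Matrix.diagonal (fun l =>
          (((K : ℝ) ^ 2 / (4 * π ^ 2) : ℝ) : ℂ) * lam1 l + ((dhat - m - 1 : ℝ) : ℂ)) := by
    have hd : (Matrix.diagonal (fun l : Fin K =>
          (((K : ℝ) ^ 2 / (4 * π ^ 2) : ℝ) : ℂ) * lam1 l + ((dhat - m - 1 : ℝ) : ℂ)))
        = Matrix.diagonal (fun l => (((K : ℝ) ^ 2 / (4 * π ^ 2) : ℝ) : ℂ) * lam1 l)
          + ((dhat - m - 1 : ℝ) : ℂ) • 1 := by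
      ext i j
      by_cases hij : i = j <;> simp [Matrix.diagonal_apply, hij, Matrix.one_apply]
    rw [hd, Matrix.add_mul, Matrix.mul_add, hsmul _ _ lam1 hA1F, Matrix.smul_mul,
      Matrix.one_mul, Matrix.mul_smul, Matrix.mul_one]
  have hP2 := hsmul ((dhat - 1) * K / (4 * π)) _ lam2 hA2F
  have hP3 := hsmul (-((dhat - 1) * K / (4 * π))) _ lam2 hA2F
  have hP4 := hsmul (-(dhat * (K : ℝ) ^ 2 / (4 * π ^ 2))) _ lam1 hA1F
  have hT : (matT K m dhat).map (Complex.ofRealHom)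
      = Matrix.fromBlocks
          ((((K : ℝ) ^ 2 / (4 * π ^ 2) : ℝ) : ℂ) • (matA₁ K).map ⇑Complex.ofRealHom
            + ((dhat - m - 1 : ℝ) : ℂ) • 1)
          ((((dhat - 1) * K / (4 * π) : ℝ) : ℂ) • (matA₂ K).map ⇑Complex.ofRealHom)
          (((-((dhat - 1) * K / (4 * π)) : ℝ) : ℂ) • (matA₂ K).map ⇑Complex.ofRealHom)
          (((-(dhat * (K : ℝ) ^ 2 / (4 * π ^ 2)) : ℝ) : ℂ) • (matA₁ K).map ⇑Complex.ofRealHom) := by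
    unfold matT
    rw [Matrix.fromBlocks_map, mapRC_addsmul, mapRC_smul, mapRC_smul, mapRC_smul]
  set G : Matrix (Fin K ⊕ Fin K) (Fin K ⊕ Fin K) ℂ :=
    Matrix.fromBlocks (Fmat K) 0 0 (Fmat K) with hG
  set N : Matrix (Fin K ⊕ Fin K) (Fin K ⊕ Fin K) ℂ :=
    Matrix.fromBlocks
      (Matrix.diagonal (fun l =>
        (((K : ℝ) ^ 2 / (4 * π ^ 2) : ℝ) : ℂ) * lam1 l + ((dhat - m - 1 : ℝ) : ℂ)))
      (Matrix.diagonal (fun l => (((dhat - 1) * K / (4 * π) : ℝ) : ℂ) * lam2 l))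
      (Matrix.diagonal (fun l => ((-((dhat - 1) * K / (4 * π)) : ℝ) : ℂ) * lam2 l))
      (Matrix.diagonal (fun l => ((-(dhat * (K : ℝ) ^ 2 / (4 * π ^ 2)) : ℝ) : ℂ) * lam1 l))
    with hN
  have hTG : ((matT K m dhat).map (Complex.ofRealHom)) * G = G * N := by
    rw [hT, hG, hN, Matrix.fromBlocks_multiply, Matrix.fromBlocks_multiply]
    simp only [Matrix.mul_zero, Matrix.zero_mul, add_zero, zero_add, hP1, hP2, hP3, hP4]
  have hdetG : G.det ≠ 0 := by
    rw [hG, Matrix.det_fromBlocks_zero₂₁]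
    exact mul_ne_zero (det_Fmat_ne_zero K hK0) (det_Fmat_ne_zero K hK0)
  have hconj : (x • (1 : Matrix (Fin K ⊕ Fin K) (Fin K ⊕ Fin K) ℂ)
      - (matT K m dhat).map (Complex.ofRealHom)) * G
      = G * (x • (1 : Matrix (Fin K ⊕ Fin K) (Fin K ⊕ Fin K) ℂ) - N) := by
    rw [Matrix.sub_mul, Matrix.mul_sub, hTG, Matrix.smul_mul, Matrix.mul_smul,
      Matrix.one_mul, Matrix.mul_one]
  have hdeteq : (x • (1 : Matrix (Fin K ⊕ Fin K) (Fin K ⊕ Fin K) ℂ)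
      - (matT K m dhat).map (Complex.ofRealHom)).det
      = (x • (1 : Matrix (Fin K ⊕ Fin K) (Fin K ⊕ Fin K) ℂ) - N).det := by
    have h := congrArg Matrix.det hconj
    rw [Matrix.det_mul, Matrix.det_mul] at h
    exact mul_right_cancel₀ hdetG (h.trans (mul_comm _ _))
  have hsubN : (x • (1 : Matrix (Fin K ⊕ Fin K) (Fin K ⊕ Fin K) ℂ) - N)
      = Matrix.fromBlocks
          (Matrix.diagonal (fun l => x -
            ((((K : ℝ) ^ 2 / (4 * π ^ 2) : ℝ) : ℂ) * lam1 l + ((dhat - m - 1 : ℝ) : ℂ))))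
          (Matrix.diagonal (fun l => -((((dhat - 1) * K / (4 * π) : ℝ) : ℂ) * lam2 l)))
          (Matrix.diagonal (fun l => -(((-((dhat - 1) * K / (4 * π)) : ℝ) : ℂ) * lam2 l)))
          (Matrix.diagonal (fun l => x
            - ((-(dhat * (K : ℝ) ^ 2 / (4 * π ^ 2)) : ℝ) : ℂ) * lam1 l)) := by
    rw [hN]
    ext i j
    rcases i with i | i <;> rcases j with j | j <;>
      by_cases hij : i = j <;>
      simp [Matrix.sub_apply, Matrix.smul_apply, Matrix.one_apply, Matrix.diagonal_apply, hij]
  rw [hdeteq, hsubN, my_det_fromBlocks_diagonal]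
  apply Finset.prod_congr rfl
  intro l _
  have h1 : lam1 l = ((-4 * Real.sin (π * l / K) ^ 2 : ℝ) : ℂ) := sumA1_eq K hK l
  have h2 : lam2 l ^ 2
      = ((-16 * Real.sin (π * l / K) ^ 2 * (1 - Real.sin (π * l / K) ^ 2) : ℝ) : ℂ) :=
    sumA2_sq_eq K hK l
  simp only [aRe, dRe, eRe, Sfun]
  rw [h1]
  push_cast at h2 ⊢
  linear_combination (((dhat : ℂ) - 1) * (K : ℂ) / (4 * (π : ℂ))) ^ 2 * h2

/-- The real characteristic polynomial of `matT` factors into linear terms. -/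
lemma charpoly_matT (K : ℕ) (hK : 3 ≤ K) (m dhat : ℝ)
    (hc : ∀ l : Fin K, cRe K m dhat l ≤ 0) :
    (matT K m dhat).charpoly
      = ∏ l : Fin K, ((X - C (rpF K m dhat l)) * (X - C (rmF K m dhat l))) := by
  apply Polynomial.map_injective (Complex.ofRealHom) Complex.ofReal_injective
  rw [← Matrix.charpoly_map (matT K m dhat) Complex.ofRealHom]
  apply Polynomial.funext
  intro x
  rw [my_eval_charpoly, det_key K hK m dhat x]
  simp only [Polynomial.map_prod, Polynomial.map_mul, Polynomial.map_sub, Polynomial.map_X,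
    Polynomial.map_C, Polynomial.eval_prod, Polynomial.eval_mul, Polynomial.eval_sub,
    Polynomial.eval_X, Polynomial.eval_C, Complex.ofRealHom_eq_coe]
  apply Finset.prod_congr rfl
  intro l _
  have hD : 0 ≤ DRe K m dhat l := by
    have := hc l
    rw [DRe]
    nlinarith [sq_nonneg (bRe K m dhat l)]
  have hsum : rpF K m dhat l + rmF K m dhat l = aRe K m dhat l + dRe K m dhat l := by
    rw [rpF, rmF, bRe]; ring
  have hprod : rpF K m dhat l * rmF K m dhat l
      = aRe K m dhat l * dRe K m dhat l + eRe K m dhat l := by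
    have hs : Real.sqrt (DRe K m dhat l) ^ 2
        = bRe K m dhat l ^ 2 - 4 * (aRe K m dhat l * dRe K m dhat l + eRe K m dhat l) := by
      rw [Real.sq_sqrt hD, DRe, cRe]
    rw [rpF, rmF]
    linear_combination (-1/4 : ℝ) * hs
  have hsC : ((rpF K m dhat l : ℝ) : ℂ) + ((rmF K m dhat l : ℝ) : ℂ)
      = ((aRe K m dhat l : ℝ) : ℂ) + ((dRe K m dhat l : ℝ) : ℂ) := by
    exact_mod_cast congrArg (fun y : ℝ => (y : ℂ)) hsum
  have hpC : ((rpF K m dhat l : ℝ) : ℂ) * ((rmF K m dhat l : ℝ) : ℂ)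
      = ((aRe K m dhat l : ℝ) : ℂ) * ((dRe K m dhat l : ℝ) : ℂ)
        + ((eRe K m dhat l : ℝ) : ℂ) := by
    exact_mod_cast congrArg (fun y : ℝ => (y : ℂ)) hprod
  linear_combination x * hsC - hpC

end MainDet

theorem stmt_16 (m : ℝ) (hm : 1 < m) :
    ∃ K₀ : ℕ, ∀ K : ℕ, K₀ ≤ K → ∀ dhat : ℝ, m + 1 < dhat →
      m * Real.log K ≤ dhat → dhat ≤ 2 * m * Real.log K →
      Multiset.count (0 : ℝ) (Matrix.charpoly (matT K m dhat)).roots = 1 ∧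
      Multiset.card (Multiset.filter (fun Λ : ℝ => Λ < 0)
        (Matrix.charpoly (matT K m dhat)).roots) = K - 1 ∧
      Multiset.card (Multiset.filter (fun Λ : ℝ => 0 < Λ)
        (Matrix.charpoly (matT K m dhat)).roots) = K := by
  classical
  refine ⟨⌈2 * m * π ^ 2⌉₊ + 3, fun K hKb dhat hd1 _hd2 hd3 => ?_⟩
  have hK3 : 3 ≤ K := by omega
  have hK0 : K ≠ 0 := by omega
  haveI : NeZero K := ⟨hK0⟩
  have hKR : (0 : ℝ) < K := by exact_mod_cast Nat.pos_of_ne_zero hK0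
  have hπ : (0 : ℝ) < π := Real.pi_pos
  have hπ2 : (0 : ℝ) < π ^ 2 := by positivity
  have hKπ : 2 * m * π ^ 2 ≤ (K : ℝ) :=
    le_trans (Nat.le_ceil _) (by exact_mod_cast Nat.cast_le.mpr (by omega : ⌈2 * m * π ^ 2⌉₊ ≤ K))
  have hm0 : (0 : ℝ) < m := lt_trans one_pos hm
  have hd0 : 0 < dhat := by linarith
  have hc4 : 0 < dhat - m - 1 := by linarith
  have hlog : Real.log K ≤ (K : ℝ) - 1 := Real.log_le_sub_one_of_pos hKR
  have hdK : dhat ≤ 2 * m * ((K : ℝ) - 1) := le_trans hd3 (by nlinarith)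
  have hdle : dhat * π ^ 2 ≤ (K : ℝ) ^ 2 := by nlinarith
  -- basic facts about `Sfun`
  have hS0 : Sfun K 0 = 0 := by simp [Sfun]
  have hSnn : ∀ l : Fin K, 0 ≤ Sfun K l := fun l => sq_nonneg _
  have hSpos : ∀ l : Fin K, l ≠ 0 → 0 < Sfun K l := by
    intro l hl
    have hlv : 0 < ((l : ℕ) : ℝ) := by
      have h : (l : ℕ) ≠ 0 := fun h => hl (Fin.ext (by simpa using h))
      exact_mod_cast Nat.pos_of_ne_zero h
    have h1 : 0 < π * l / K := by positivity
    have h2 : π * l / K < π := by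
      rw [div_lt_iff₀ hKR]
      have h3 : ((l : ℕ) : ℝ) < K := by exact_mod_cast l.isLt
      nlinarith
    exact pow_pos (Real.sin_pos_of_pos_of_lt_pi h1 h2) 2
  -- the key sign facts about `cRe`
  have hcRe : ∀ l : Fin K, cRe K m dhat l
      = 4 * ((K : ℝ) ^ 2 / (4 * π ^ 2)) * Sfun K l * (((1 - m) * dhat - 1)
          + Sfun K l * ((dhat - 1) ^ 2 - dhat * (K : ℝ) ^ 2 / π ^ 2)) := by
    intro l
    simp only [cRe, aRe, dRe, eRe]
    field_simp
    ring
  have hb1 : (1 - m) * dhat - 1 < 0 := by nlinarith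
  have hb2 : (dhat - 1) ^ 2 - dhat * (K : ℝ) ^ 2 / π ^ 2 ≤ 0 := by
    have h3 : dhat ≤ (K : ℝ) ^ 2 / π ^ 2 := by rw [le_div_iff₀ hπ2]; linarith [hdle]
    have h4 : dhat * dhat ≤ dhat * (K : ℝ) ^ 2 / π ^ 2 := by
      calc dhat * dhat ≤ dhat * ((K : ℝ) ^ 2 / π ^ 2) := mul_le_mul_of_nonneg_left h3 hd0.le
        _ = dhat * (K : ℝ) ^ 2 / π ^ 2 := by ring
    nlinarith [h4]
  have hbra : ∀ l : Fin K, ((1 - m) * dhat - 1)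
      + Sfun K l * ((dhat - 1) ^ 2 - dhat * (K : ℝ) ^ 2 / π ^ 2) < 0 := by
    intro l
    have h := mul_nonpos_of_nonneg_of_nonpos (hSnn l) hb2
    linarith
  have hcle : ∀ l : Fin K, cRe K m dhat l ≤ 0 := by
    intro l
    rw [hcRe l]
    have hA4 : 0 ≤ 4 * ((K : ℝ) ^ 2 / (4 * π ^ 2)) * Sfun K l := mul_nonneg (by positivity) (hSnn l)
    exact mul_nonpos_of_nonneg_of_nonpos hA4 (hbra l).le
  have hcneg : ∀ l : Fin K, l ≠ 0 → cRe K m dhat l < 0 := by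
    intro l hl
    rw [hcRe l]
    have hA4 : 0 < 4 * ((K : ℝ) ^ 2 / (4 * π ^ 2)) * Sfun K l :=
      mul_pos (by positivity) (hSpos l hl)
    exact mul_neg_of_pos_of_neg hA4 (hbra l)
  -- data at `l = 0`
  have haR0 : aRe K m dhat 0 = dhat - m - 1 := by simp [aRe, hS0]
  have hdR0 : dRe K m dhat 0 = 0 := by simp [dRe, hS0]
  have heR0 : eRe K m dhat 0 = 0 := by simp [eRe, hS0]
  have hbR0 : bRe K m dhat 0 = dhat - m - 1 := by rw [bRe, haR0, hdR0]; ring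
  have hcR0 : cRe K m dhat 0 = 0 := by rw [cRe, hdR0, heR0]; ring
  have hDR0 : DRe K m dhat 0 = (dhat - m - 1) ^ 2 := by rw [DRe, hbR0, hcR0]; ring
  have hrp0 : rpF K m dhat 0 = dhat - m - 1 := by
    rw [rpF, hDR0, hbR0, Real.sqrt_sq hc4.le]; ring
  have hrm0 : rmF K m dhat 0 = 0 := by
    rw [rmF, hDR0, hbR0, Real.sqrt_sq hc4.le]; ring
  -- sign facts about the roots
  have habs : ∀ l : Fin K, l ≠ 0 → |bRe K m dhat l| < Real.sqrt (DRe K m dhat l) := by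
    intro l hl
    rw [← Real.sqrt_sq_eq_abs]
    apply Real.sqrt_lt_sqrt (sq_nonneg _)
    rw [DRe]
    linarith [hcneg l hl]
  have hrppos : ∀ l : Fin K, 0 < rpF K m dhat l := by
    intro l
    by_cases hl : l = 0
    · rw [hl, hrp0]; exact hc4
    · have h := habs l hl
      have h2 := neg_abs_le (bRe K m dhat l)
      rw [rpF]; linarith
  have hrmneg : ∀ l : Fin K, l ≠ 0 → rmF K m dhat l < 0 := by
    intro l hl
    have h := habs l hl
    have h2 := le_abs_self (bRe K m dhat l)
    rw [rmF]; linarith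
  -- roots of the characteristic polynomial
  rw [charpoly_matT K hK3 m dhat hcle]
  have hfne : ∀ l : Fin K, (Polynomial.X - Polynomial.C (rpF K m dhat l))
      * (Polynomial.X - Polynomial.C (rmF K m dhat l)) ≠ 0 := fun l =>
    mul_ne_zero (Polynomial.X_sub_C_ne_zero _) (Polynomial.X_sub_C_ne_zero _)
  have hroots : (∏ l : Fin K, ((Polynomial.X - Polynomial.C (rpF K m dhat l))
      * (Polynomial.X - Polynomial.C (rmF K m dhat l)))).roots
      = Finset.univ.val.map (rpF K m dhat) + Finset.univ.val.map (rmF K m dhat) := by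
    rw [Polynomial.roots_prod _ _ (Finset.prod_ne_zero_iff.mpr fun l _ => hfne l)]
    calc Finset.univ.val.bind (fun l => ((Polynomial.X - Polynomial.C (rpF K m dhat l))
        * (Polynomial.X - Polynomial.C (rmF K m dhat l))).roots)
        = Finset.univ.val.bind (fun l => ({rpF K m dhat l} : Multiset ℝ)
            + ({rmF K m dhat l} : Multiset ℝ)) := by
          apply Multiset.bind_congr
          intro l _
          rw [Polynomial.roots_mul (hfne l), Polynomial.roots_X_sub_C,
            Polynomial.roots_X_sub_C]
      _ = Finset.univ.val.bind (fun l => ({rpF K m dhat l} : Multiset ℝ))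
            + Finset.univ.val.bind (fun l => ({rmF K m dhat l} : Multiset ℝ)) :=
          Multiset.bind_add _ _ _
      _ = Finset.univ.val.map (rpF K m dhat) + Finset.univ.val.map (rmF K m dhat) := by
          rw [Multiset.bind_singleton, Multiset.bind_singleton]
  rw [hroots]
  have key : ∀ (f : Fin K → ℝ) (p : ℝ → Prop) (_ : DecidablePred p),
      Multiset.card (Multiset.filter p (Finset.univ.val.map f))
        = (Finset.univ.filter (fun l => p (f l))).card := by
    intro f p hp
    rw [← Multiset.countP_eq_card_filter, Multiset.countP_map, Finset.card_def,
      Finset.filter_val]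
  refine ⟨?_, ?_, ?_⟩
  · -- one zero eigenvalue
    rw [Multiset.count_add, Multiset.count_map, Multiset.count_map]
    have h1 : Multiset.filter (fun l => (0 : ℝ) = rpF K m dhat l) Finset.univ.val = 0 :=
      Multiset.filter_eq_nil.mpr fun l _ => (hrppos l).ne
    have h2 : Multiset.filter (fun l => (0 : ℝ) = rmF K m dhat l) Finset.univ.val
        = Multiset.filter (fun l => l = (0 : Fin K)) Finset.univ.val := by
      apply Multiset.filter_congr
      intro l _
      constructor
      · intro h
        by_contra hl
        exact absurd h.symm (hrmneg l hl).ne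
      · intro h
        rw [h, hrm0]
    rw [h1, h2, Multiset.filter_eq', Multiset.count_univ, Multiset.card_replicate,
      Multiset.card_zero]
  · -- K - 1 negative eigenvalues
    rw [Multiset.filter_add, Multiset.card_add, key _ _ (fun _ => inferInstance),
      key _ _ (fun _ => inferInstance)]
    have hA : Finset.filter (fun l => rpF K m dhat l < 0) Finset.univ = ∅ :=
      Finset.filter_false_of_mem (fun l _ => not_lt.mpr (hrppos l).le)
    have hB : Finset.filter (fun l => rmF K m dhat l < 0) Finset.univ
        = Finset.univ.erase (0 : Fin K) := by
      rw [← Finset.filter_ne']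
      apply Finset.filter_congr
      intro l _
      constructor
      · intro h hl0
        rw [hl0, hrm0] at h
        exact lt_irrefl 0 h
      · intro h
        exact hrmneg l h
    rw [hA, hB, Finset.card_empty, Finset.card_erase_of_mem (Finset.mem_univ _),
      Finset.card_univ, Fintype.card_fin]
    omega
  · -- K positive eigenvalues
    rw [Multiset.filter_add, Multiset.card_add, key _ _ (fun _ => inferInstance),
      key _ _ (fun _ => inferInstance)]
    have hA : Finset.filter (fun l => 0 < rpF K m dhat l) Finset.univ = Finset.univ :=
      Finset.filter_true_of_mem (fun l _ => hrppos l)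
    have hB : Finset.filter (fun l => 0 < rmF K m dhat l) Finset.univ = ∅ := by
      apply Finset.filter_false_of_mem
      intro l _
      by_cases hl : l = 0
      · rw [hl, hrm0]; exact lt_irrefl 0
      · exact not_lt.mpr (hrmneg l hl).le
    rw [hA, hB, Finset.card_empty, Finset.card_univ, Fintype.card_fin]
    omega
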